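/- For all natural numbers n, m and every integer t, the identity C(t,n)·C(t,m) = ∑_{k=max(n,m)}^{n+m} C(k,n)·C(n, n+m−k)·C(t,k) holds, where C denotes the binomial coefficient (extended to integer top argument by C(t,k) = t(t−1)⋯(t−k+1)/k!). -/

import Mathlib

/-- The generalized binomial coefficient `C(t, k)` for an integer `t` and a natural
number `k`: the falling factorial `t(t−1)⋯(t−k+1)` divided by `k!` (an exact division). -/
def intChoose (t : ℤ) (k : ℕ) : ℤ :=
  (∏ i ∈ Finset.range k, (t - (i : ℤ))) / (k.factorial : ℤ)

lemma descPochhammer_smeval_int (t : ℤ) (k : ℕ) :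
    (descPochhammer ℤ k).smeval t = ∏ i ∈ Finset.range k, (t - (i : ℤ)) := by
  induction k with
  | zero => simp
  | succ k ih =>
    rw [descPochhammer_succ_right, Polynomial.smeval_mul, ih, Finset.prod_range_succ]
    simp [Polynomial.smeval_sub, Polynomial.smeval_X, Polynomial.smeval_natCast]

lemma intChoose_eq_ringChoose (t : ℤ) (k : ℕ) : intChoose t k = Ring.choose t k := by
  unfold intChoose
  rw [← descPochhammer_smeval_int, Ring.descPochhammer_eq_factorial_smul_choose,
    nsmul_eq_mul]
  exact Int.mul_ediv_cancel_left _ (by exact_mod_cast k.factorial_ne_zero)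

/-- For all natural numbers n, m and every integer t,
C(t,n)·C(t,m) = ∑_{k=max(n,m)}^{n+m} C(k,n)·C(n, n+m−k)·C(t,k). -/
theorem intChoose_mul_intChoose (n m : ℕ) (t : ℤ) :
    intChoose t n * intChoose t m =
      ∑ k ∈ Finset.Icc (max n m) (n + m),
        ((k.choose n * n.choose (n + m - k) : ℕ) : ℤ) * intChoose t k := by
  simp only [intChoose_eq_ringChoose]
  have vand : Ring.choose t m =
      ∑ i ∈ Finset.range (m + 1),
        ((n.choose i : ℤ)) * Ring.choose (t - n) (m - i) := by
    have h := Ring.add_choose_eq (R := ℤ) (r := (n : ℤ)) (s := t - n) m (Commute.all _ _)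
    rw [Finset.Nat.sum_antidiagonal_eq_sum_range_succ_mk] at h
    have : (n : ℤ) + (t - n) = t := by ring
    rw [this] at h
    rw [h]
    refine Finset.sum_congr rfl fun i _ => ?_
    rw [Ring.choose_natCast]
  -- key product identity
  have key : Ring.choose t n * Ring.choose t m =
      ∑ i ∈ Finset.range (m + 1),
        ((n.choose i : ℤ)) * (((n + (m - i)).choose n : ℤ) * Ring.choose t (n + (m - i))) := by
    rw [vand, Finset.mul_sum]
    refine Finset.sum_congr rfl fun i _ => ?_
    have h := Ring.choose_smul_choose (R := ℤ) t (n := n + (m - i)) (k := n) (Nat.le_add_right _ _)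
    rw [Nat.add_sub_cancel_left] at h
    rw [mul_left_comm, ← h, nsmul_eq_mul]
  rw [key]
  -- extend RHS sum from Icc (max n m) to Icc n
  have hsub : Finset.Icc (max n m) (n + m) ⊆ Finset.Icc n (n + m) := by
    apply Finset.Icc_subset_Icc_left (le_max_left _ _)
  rw [Finset.sum_subset hsub (by
    intro k hk hk'
    simp only [Finset.mem_Icc] at hk
    have hkm : k < m := by
      rcases lt_or_ge k (max n m) with h | h
      · exact lt_of_lt_of_le h (by omega)
      · exact absurd (Finset.mem_Icc.mpr ⟨h, hk.2⟩) hk'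
    have : n < n + m - k := by omega
    rw [Nat.choose_eq_zero_of_lt this]
    simp)]
  -- reindex: k = n + (m - i), i ∈ range (m+1) ↔ k ∈ Icc n (n+m)
  refine Finset.sum_nbij' (fun i => n + (m - i)) (fun k => n + m - k) ?_ ?_ ?_ ?_ ?_
  · intro i hi
    simp only [Finset.mem_range] at hi
    simp only [Finset.mem_Icc]; omega
  · intro k hk
    simp only [Finset.mem_Icc] at hk
    simp only [Finset.mem_range]; omega
  · intro i hi
    simp only [Finset.mem_range] at hi
    show n + m - (n + (m - i)) = i
    omega
  · intro k hk
    simp only [Finset.mem_Icc] at hk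
    show n + (m - (n + m - k)) = k
    omega
  · intro i hi
    simp only [Finset.mem_range] at hi
    have h1 : n + m - (n + (m - i)) = i := by omega
    rw [h1]
    push_cast
    ring
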